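/- Fix d, n, L ≥ 1 and step sizes η^(1), …, η^(L) ∈ ℝ. There exist weights (W₀^(ℓ), W₁^(ℓ), P^(ℓ), Q^(ℓ))_{ℓ=1}^L of a 2L-layer bilinear Transformer with embedding dimension D = 2d+1 such that for all x_1, …, x_{n+1} ∈ ℝ^d and y_1, …, y_n ∈ ℝ, with prompt Z having i-th column ((1, x_i, 0_d), y_i) for i ≤ n and last column ((1, x_{n+1}, 0_d), 0), the layer outputs satisfy, for every ℓ ∈ {1, …, L}: Z^(2ℓ)[2d+2, n+1] = f(x_{n+1}; w^(ℓ)), where (w^(ℓ))_{ℓ=0}^L are the iterates of block-coordinate descent for quadratic regression with step sizes η^(ℓ), initialization w^(0) = 0, and blocks b_ℓ = {(0,0)} ∪ {(0,j) : 1 ≤ j ≤ d} ∪ {(min(j, r_ℓ), max(j, r_ℓ)) : 1 ≤ j ≤ d}, where r_ℓ ∈ {1, …, d} is the representative of ℓ modulo d. -/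

import Mathlib

open MeasureTheory ProbabilityTheory Matrix

noncomputable section

/-- The mask `M = diag(I_n, 0)`. -/
def attnMask (n : ℕ) : Matrix (Fin (n + 1)) (Fin (n + 1)) ℝ :=
  Matrix.diagonal fun i => if i = Fin.last n then 0 else 1

/-- A linear self-attention layer with weights `P, Q`. -/
def attn (D n : ℕ) (P Q : Matrix (Fin (D + 1)) (Fin (D + 1)) ℝ)
    (Z : Matrix (Fin (D + 1)) (Fin (n + 1)) ℝ) : Matrix (Fin (D + 1)) (Fin (n + 1)) ℝ :=
  Z + (n : ℝ)⁻¹ • (P * Z * attnMask n * (Zᵀ * Q * Z))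

/-- `diag(W, 0)`: places `W` in the top-left `D × D` block. -/
def diagEmbed (D : ℕ) (W : Matrix (Fin D) (Fin D) ℝ) : Matrix (Fin (D + 1)) (Fin (D + 1)) ℝ :=
  Matrix.of fun i j =>
    if hi : (i : ℕ) < D then
      (if hj : (j : ℕ) < D then W ⟨(i : ℕ), hi⟩ ⟨(j : ℕ), hj⟩ else 0)
    else 0

/-- The bilinear feed-forward layer `bilin(Z) = Z + (diag(W₀,0)Z) ⊙ (diag(W₁,0)Z)`. -/
def bilinLayer (D n : ℕ) (W0 W1 : Matrix (Fin D) (Fin D) ℝ)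
    (Z : Matrix (Fin (D + 1)) (Fin (n + 1)) ℝ) : Matrix (Fin (D + 1)) (Fin (n + 1)) ℝ :=
  Matrix.of fun i j => Z i j + (diagEmbed D W0 * Z) i j * (diagEmbed D W1 * Z) i j

/-- Forward pass of the `2L`-layer bilinear Transformer: `TFbilinFwd … Z ℓ = Z^{(2ℓ)}`,
obtained by alternating bilinear and attention layers with the `ℓ`-th block weights
`(W₀^{(ℓ)}, W₁^{(ℓ)}, P^{(ℓ)}, Q^{(ℓ)})`. -/
def TFbilinFwd (D n : ℕ) (W0 W1 : ℕ → Matrix (Fin D) (Fin D) ℝ)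
    (P Q : ℕ → Matrix (Fin (D + 1)) (Fin (D + 1)) ℝ)
    (Z : Matrix (Fin (D + 1)) (Fin (n + 1)) ℝ) : ℕ → Matrix (Fin (D + 1)) (Fin (n + 1)) ℝ
  | 0 => Z
  | ℓ + 1 => attn D n (P (ℓ + 1)) (Q (ℓ + 1))
      (bilinLayer D n (W0 (ℓ + 1)) (W1 (ℓ + 1)) (TFbilinFwd D n W0 W1 P Q Z ℓ))

/-- The prompt matrix: column `i ≤ n` is `((1, x_i, 0_d), y_i)`, last column
`((1, x_{n+1}, 0_d), 0)`. -/
def promptX (d D n : ℕ) (x : Fin (n + 1) → Fin d → ℝ) (y : Fin n → ℝ) :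
    Matrix (Fin (D + 1)) (Fin (n + 1)) ℝ :=
  Matrix.of fun i j =>
    if h0 : (i : ℕ) = 0 then 1
    else if h1 : (i : ℕ) ≤ d then x j ⟨(i : ℕ) - 1, by omega⟩
    else if (i : ℕ) = D then (if hj : (j : ℕ) < n then y ⟨(j : ℕ), hj⟩ else 0)
    else 0

/-- Index set of the pairs `0 ≤ i ≤ j ≤ d` indexing the quadratic regression
coefficients. -/
abbrev QIdx (d : ℕ) := { p : Fin (d + 1) × Fin (d + 1) // p.1 ≤ p.2 }

/-- Extended input `(1, x)`. -/
def xext (d : ℕ) (x : Fin d → ℝ) (i : Fin (d + 1)) : ℝ :=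
  if h : (i : ℕ) = 0 then 1 else x ⟨(i : ℕ) - 1, by have := i.isLt; omega⟩

/-- The quadratic regression features: `φ_{00}(x) = 1`, `φ_{0j}(x) = x[j]`,
`φ_{ij}(x) = x[i]·x[j]` for `1 ≤ i ≤ j ≤ d`. -/
def qphi (d : ℕ) (x : Fin d → ℝ) (p : QIdx d) : ℝ :=
  xext d x p.1.1 * xext d x p.1.2

/-- The quadratic regression loss `L(w) = (1/2n) Σᵢ (⟨w, φ(xᵢ)⟩ + yᵢ)²`. -/
def quadLoss (d n : ℕ) (x : Fin n → Fin d → ℝ) (y : Fin n → ℝ) (w : QIdx d → ℝ) : ℝ :=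
  (2 * (n : ℝ))⁻¹ * ∑ i : Fin n, ((∑ p : QIdx d, w p * qphi d (x i) p) + y i) ^ 2

/-- Block-coordinate descent iterates for an objective `F`, step sizes `η^{(ℓ)}` and
blocks `b_ℓ`, starting from `w^{(0)} = 0`: at step `ℓ` the coordinates in `b_ℓ` move
along the corresponding partial derivatives, all other coordinates stay. -/
def bcdIter {I : Type} [Fintype I] [DecidableEq I]
    (F : (I → ℝ) → ℝ) (η : ℕ → ℝ) (b : ℕ → Finset I) : ℕ → I → ℝ
  | 0 => 0
  | ℓ + 1 => fun p =>
      if p ∈ b (ℓ + 1) then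
        bcdIter F η b ℓ p - η (ℓ + 1) * fderiv ℝ F (bcdIter F η b ℓ) (Pi.single p 1)
      else bcdIter F η b ℓ p

/-- The `ℓ`-th coordinate block: with `r_ℓ = (ℓ-1) % d + 1` (the representative of `ℓ`
modulo `d` in `{1, …, d}`), it consists of `(0,0)`, the pairs `(0,j)` for `1 ≤ j ≤ d`,
and the pairs `(min(j,r_ℓ), max(j,r_ℓ))` for `1 ≤ j ≤ d`. -/
def blockQ (d : ℕ) (ℓ : ℕ) : Finset (QIdx d) :=
  Finset.univ.filter fun p =>
    (p.1.1 : ℕ) = 0 ∨ (p.1.1 : ℕ) = (ℓ - 1) % d + 1 ∨ (p.1.2 : ℕ) = (ℓ - 1) % d + 1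

/-! ### Auxiliary constructions for the proof -/

/-- representative of `m` modulo `d` in `{1, …, d}`. -/
def rI (d m : ℕ) : ℕ := (m - 1) % d + 1

def W0def (d : ℕ) : Matrix (Fin (2*d+1)) (Fin (2*d+1)) ℝ :=
  Matrix.of fun i j => if d + 1 ≤ (i:ℕ) ∧ (j:ℕ) + d = (i:ℕ) then 1 else 0

def W1def (d m : ℕ) : Matrix (Fin (2*d+1)) (Fin (2*d+1)) ℝ :=
  Matrix.of fun i j => if d + 1 ≤ (i:ℕ) then
      (if (j:ℕ) = rI d m then 1 else 0) - (if 2 ≤ m ∧ (j:ℕ) = rI d (m-1) then 1 else 0)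
    else 0

def Pdef (d : ℕ) : Matrix (Fin (2*d+1+1)) (Fin (2*d+1+1)) ℝ :=
  Matrix.single (Fin.last _) (Fin.last _) 1

def Qdef (d : ℕ) (e : ℝ) : Matrix (Fin (2*d+1+1)) (Fin (2*d+1+1)) ℝ :=
  Matrix.diagonal fun i => if i = Fin.last _ then 0 else -e

/-- The invariant state matrix: rows `0..d` hold `(1, x_k)`, rows `d+1..2d` hold the
scratch products `x_k[i-d] * x_k[r_m]` (zero when `m = 0`), last row holds
`⟨w, φ(x_k)⟩ + y_k`. -/
def stateM (d n : ℕ) (x : Fin (n+1) → Fin d → ℝ) (y : Fin n → ℝ) (m : ℕ) (w : QIdx d → ℝ) :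
    Matrix (Fin (2*d+1+1)) (Fin (n+1)) ℝ :=
  Matrix.of fun i k =>
    if h0 : (i:ℕ) = 0 then 1
    else if h1 : (i:ℕ) ≤ d then x k ⟨(i:ℕ)-1, by omega⟩
    else if h2 : (i:ℕ) ≤ 2*d then
      if hd : 0 < d then
        (if m = 0 then 0 else x k ⟨(i:ℕ)-d-1, by omega⟩ * x k ⟨(m-1) % d, Nat.mod_lt _ hd⟩)
      else 0
    else (∑ p : QIdx d, w p * qphi d (x k) p)
      + (if hk : (k:ℕ) < n then y ⟨(k:ℕ), hk⟩ else 0)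

lemma stateM_base' (d n : ℕ) (x : Fin (n+1) → Fin d → ℝ) (y : Fin n → ℝ) :
    stateM d n x y 0 0 = promptX d (2*d+1) n x y := by
  ext i k
  simp only [stateM, promptX, Matrix.of_apply]
  by_cases h0 : (i:ℕ) = 0
  · simp [h0]
  by_cases h1 : (i:ℕ) ≤ d
  · simp [h0, h1]
  by_cases h2 : (i:ℕ) ≤ 2*d
  · have h3 : ¬((i:ℕ) = 2*d+1) := by omega
    simp [h0, h1, h2, h3]
  · have h3 : (i:ℕ) = 2*d+1 := by have := i.isLt; omega
    simp [h0, h1, h2, h3]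

lemma fderiv_quadLoss' (d n : ℕ) (x : Fin n → Fin d → ℝ) (y : Fin n → ℝ)
    (w : QIdx d → ℝ) (p : QIdx d) :
    fderiv ℝ (quadLoss d n x y) w (Pi.single p 1)
      = (n:ℝ)⁻¹ * ∑ i : Fin n,
          ((∑ q : QIdx d, w q * qphi d (x i) q) + y i) * qphi d (x i) p := by
  classical
  have hL : ∀ i : Fin n, HasFDerivAt (fun w : QIdx d → ℝ => ∑ q : QIdx d, w q * qphi d (x i) q)
      (∑ q : QIdx d, qphi d (x i) q •
        ContinuousLinearMap.proj (R := ℝ) (φ := fun _ : QIdx d => ℝ) q) w := by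
    intro i
    refine HasFDerivAt.fun_sum fun q _ => ?_
    exact ((ContinuousLinearMap.proj (R := ℝ) (φ := fun _ : QIdx d => ℝ) q).hasFDerivAt
      (x := w)).mul_const (qphi d (x i) q)
  have hF : HasFDerivAt (quadLoss d n x y)
      ((2*(n:ℝ))⁻¹ • ∑ i : Fin n,
        ((2:ℝ) * ((∑ q : QIdx d, w q * qphi d (x i) q) + y i)) •
          (∑ q : QIdx d, qphi d (x i) q •
            ContinuousLinearMap.proj (R := ℝ) (φ := fun _ : QIdx d => ℝ) q)) w := by
    unfold quadLoss
    refine HasFDerivAt.const_mul ?_ _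
    refine HasFDerivAt.fun_sum fun i _ => ?_
    have h1 := (hL i).add_const (y i)
    have h2 := h1.fun_mul h1
    simpa [pow_two, two_mul, add_smul, smul_smul] using h2
  rw [hF.fderiv]
  simp only [ContinuousLinearMap.smul_apply, ContinuousLinearMap.sum_apply,
    ContinuousLinearMap.proj_apply, smul_eq_mul]
  have hq : ∀ i : Fin n, ∑ q : QIdx d, qphi d (x i) q * (Pi.single p (1:ℝ) : QIdx d → ℝ) q
      = qphi d (x i) p := by
    intro i
    rw [Finset.sum_eq_single p]
    · simp
    · intro q _ hq; simp [Pi.single_apply, hq]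
    · simp
  simp only [hq]
  rw [mul_inv, Finset.mul_sum, Finset.mul_sum]
  exact Finset.sum_congr rfl fun i _ => by ring

lemma xext_zero (d : ℕ) (u : Fin d → ℝ) : xext d u 0 = 1 := by simp [xext]

lemma xext_succ (d : ℕ) (u : Fin d → ℝ) (j : Fin d) : xext d u j.succ = u j := by
  have h1 : ¬ ((j.succ : Fin (d+1)) : ℕ) = 0 := by simp
  simp only [xext, dif_neg h1]
  congr 1

lemma block_sum' (d : ℕ) (hd : 0 < d) (m : ℕ) (u v : Fin d → ℝ) :
    ∑ p ∈ blockQ d m, qphi d u p * qphi d v p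
      = 1 + (∑ j : Fin d, u j * v j)
        + ∑ j : Fin d, (u j * u ⟨(m-1)%d, Nat.mod_lt _ hd⟩)
            * (v j * v ⟨(m-1)%d, Nat.mod_lt _ hd⟩) := by
  classical
  set r : ℕ := (m-1) % d with hr
  have hrd : r < d := Nat.mod_lt _ hd
  set rf : Fin (d+1) := ⟨r+1, by omega⟩ with hrf
  have hrfv : (rf : ℕ) = r + 1 := rfl
  set A : Finset (QIdx d) := Finset.univ.filter (fun p => (p.1.1:ℕ) = 0) with hA
  set B : Finset (QIdx d) := Finset.univ.filter
    (fun p => (p.1.1:ℕ) ≠ 0 ∧ ((p.1.1:ℕ) = r+1 ∨ (p.1.2:ℕ) = r+1)) with hB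
  have hsplit : blockQ d m = A ∪ B := by
    ext p
    simp only [blockQ, hA, hB, Finset.mem_filter, Finset.mem_union, Finset.mem_univ, true_and]
    rw [← hr]
    tauto
  have hdisj : Disjoint A B := by
    rw [Finset.disjoint_left]
    intro p hp hp'
    simp only [hA, hB, Finset.mem_filter, Finset.mem_univ, true_and] at hp hp'
    exact hp'.1 hp
  rw [hsplit, Finset.sum_union hdisj]
  have hAsum : ∑ p ∈ A, qphi d u p * qphi d v p = 1 + ∑ j : Fin d, u j * v j := by
    rw [show ∑ p ∈ A, qphi d u p * qphi d v p
        = ∑ b : Fin (d+1), xext d u b * xext d v b from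
      Finset.sum_nbij' (fun p => p.1.2) (fun b => ⟨(0, b), Fin.zero_le _⟩)
        (fun p _ => Finset.mem_univ _)
        (fun b _ => by simp [hA])
        (fun p hp => by
          simp only [hA, Finset.mem_filter, Finset.mem_univ, true_and] at hp
          apply Subtype.ext
          apply Prod.ext
          · exact (Fin.ext hp).symm
          · rfl)
        (fun b _ => rfl)
        (fun p hp => by
          simp only [hA, Finset.mem_filter, Finset.mem_univ, true_and] at hp
          have h0 : p.1.1 = 0 := Fin.ext hp
          simp [qphi, h0, xext_zero])]
    rw [Fin.sum_univ_succ]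
    simp [xext_zero, xext_succ]
  have hBsum : ∑ p ∈ B, qphi d u p * qphi d v p
      = ∑ j : Fin d, (u j * u ⟨r, hrd⟩) * (v j * v ⟨r, hrd⟩) := by
    have key : ∑ p ∈ B, qphi d u p * qphi d v p
        = ∑ b ∈ Finset.univ.filter (fun b : Fin (d+1) => (b:ℕ) ≠ 0),
            (xext d u b * xext d u rf) * (xext d v b * xext d v rf) := by
      refine Finset.sum_nbij'
        (i := fun p : QIdx d => if (p.1.1 : ℕ) = r+1 then p.1.2 else p.1.1)
        (j := fun b : Fin (d+1) => if h : (b:ℕ) ≤ r+1 then ⟨(b, rf), by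
            simp only [Fin.le_def]; exact h⟩ else ⟨(rf, b), by
            simp only [Fin.le_def]; omega⟩)
        ?_ ?_ ?_ ?_ ?_
      · -- hi : p ∈ B → i p ∈ filter
        intro p hp
        simp only [hB, Finset.mem_filter, Finset.mem_univ, true_and] at hp
        obtain ⟨hne, hor⟩ := hp
        have hle : (p.1.1 : ℕ) ≤ (p.1.2 : ℕ) := p.2
        simp only [Finset.mem_filter, Finset.mem_univ, true_and]
        by_cases h : (p.1.1:ℕ) = r+1 <;> simp [h] <;> rw [Fin.ext_iff, Fin.val_zero] <;> omega
      · -- hj : b ∈ filter → j b ∈ B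
        intro b hb
        simp only [Finset.mem_filter, Finset.mem_univ, true_and] at hb
        by_cases h : (b:ℕ) ≤ r+1
        · simp only [dif_pos h]
          simp only [hB, Finset.mem_filter, Finset.mem_univ, true_and]
          exact ⟨hb, Or.inr hrfv⟩
        · simp only [dif_neg h]
          simp only [hB, Finset.mem_filter, Finset.mem_univ, true_and]
          exact ⟨by omega, Or.inl hrfv⟩
      · -- left_inv : p ∈ B → j (i p) = p
        intro p hp
        beta_reduce
        simp only [hB, Finset.mem_filter, Finset.mem_univ, true_and] at hp
        have hle : (p.1.1 : ℕ) ≤ (p.1.2 : ℕ) := p.2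
        obtain ⟨hne, hor⟩ := hp
        by_cases h : (p.1.1:ℕ) = r+1
        · rw [if_pos h]
          by_cases h3 : ((p.1.2:ℕ)) ≤ r+1
          · have hb2 : (p.1.2:ℕ) = r+1 := by omega
            simp only [dif_pos h3]
            apply Subtype.ext; apply Prod.ext
            · exact Fin.ext (show ((p.1.2 : Fin (d+1)):ℕ) = ((p.1.1 : Fin (d+1)):ℕ) by omega)
            · exact Fin.ext (show (r+1 : ℕ) = ((p.1.2 : Fin (d+1)):ℕ) by omega)
          · simp only [dif_neg h3]
            apply Subtype.ext; apply Prod.ext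
            · exact Fin.ext (show (r+1 : ℕ) = ((p.1.1 : Fin (d+1)):ℕ) by omega)
            · rfl
        · rw [if_neg h]
          have hb : (p.1.2:ℕ) = r+1 := by tauto
          have h3 : (p.1.1:ℕ) ≤ r+1 := by omega
          simp only [dif_pos h3]
          apply Subtype.ext; apply Prod.ext
          · rfl
          · exact Fin.ext (show (r+1 : ℕ) = ((p.1.2 : Fin (d+1)):ℕ) by omega)
      · -- right_inv : b ∈ filter → i (j b) = b
        intro b hb
        beta_reduce
        simp only [Finset.mem_filter, Finset.mem_univ, true_and] at hb
        by_cases h : (b:ℕ) ≤ r+1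
        · simp only [dif_pos h]
          show (if ((b : Fin (d+1)):ℕ) = r+1 then rf else b) = b
          by_cases h2 : (b:ℕ) = r+1
          · rw [if_pos h2]
            exact Fin.ext h2.symm
          · rw [if_neg h2]
        · simp only [dif_neg h]
          simp [hrfv]
      · -- terms
        intro p hp
        beta_reduce
        simp only [hB, Finset.mem_filter, Finset.mem_univ, true_and] at hp
        obtain ⟨hne, hor⟩ := hp
        by_cases h : (p.1.1:ℕ) = r+1
        · rw [if_pos h, show rf = p.1.1 from Fin.ext h.symm]
          simp only [qphi]
          try ring
        · rw [if_neg h]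
          have hb : (p.1.2:ℕ) = r+1 := by tauto
          rw [show rf = p.1.2 from Fin.ext hb.symm]
          simp only [qphi]
          try ring
    rw [key, Finset.sum_filter, Fin.sum_univ_succ]
    have hrfx : ∀ w : Fin d → ℝ, xext d w rf = w ⟨r, hrd⟩ := by
      intro w
      have : rf = (⟨r, hrd⟩ : Fin d).succ := Fin.ext rfl
      rw [this, xext_succ]
    simp [xext_succ, hrfx]
  rw [hAsum, hBsum]

section stateMapply
variable (d n : ℕ) (x : Fin (n+1) → Fin d → ℝ) (y : Fin n → ℝ) (m : ℕ) (w : QIdx d → ℝ)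
  (k : Fin (n+1))

lemma stateM_zero : stateM d n x y m w ⟨0, by omega⟩ k = 1 := by
  simp [stateM]

lemma stateM_xrow (j : Fin d) :
    stateM d n x y m w ⟨(j:ℕ)+1, by omega⟩ k = x k j := by
  have hj := j.isLt
  simp only [stateM, Matrix.of_apply]
  rw [dif_neg (by omega), dif_pos (by omega)]
  exact congrArg _ (Fin.ext (by simp))

lemma stateM_srow (hd : 0 < d) (hm : m ≠ 0) (j : Fin d) :
    stateM d n x y m w ⟨d+1+(j:ℕ), by omega⟩ k
      = x k j * x k ⟨(m-1)%d, Nat.mod_lt _ hd⟩ := by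
  have hj := j.isLt
  simp only [stateM, Matrix.of_apply]
  rw [dif_neg (by omega), dif_neg (by omega), dif_pos (by omega), dif_pos hd, if_neg hm]
  congr 2
  exact Fin.ext (by simp; omega)

lemma stateM_lastrow :
    stateM d n x y m w (Fin.last (2*d+1)) k
      = (∑ p : QIdx d, w p * qphi d (x k) p)
        + (if hk : (k:ℕ) < n then y ⟨(k:ℕ), hk⟩ else 0) := by
  have h : ((Fin.last (2*d+1) : Fin (2*d+1+1)) : ℕ) = 2*d+1 := rfl
  simp only [stateM, Matrix.of_apply, h]
  rw [dif_neg (by omega), dif_neg (by omega), dif_neg (by omega)]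

end stateMapply

lemma col_inner' (d n : ℕ) (hd : 0 < d) (x : Fin (n+1) → Fin d → ℝ) (y : Fin n → ℝ)
    (m : ℕ) (hm : 1 ≤ m) (w : QIdx d → ℝ) (c k : Fin (n+1)) :
    ∑ b : Fin (2*d+1+1), (if b = Fin.last (2*d+1) then 0
        else stateM d n x y m w b c * stateM d n x y m w b k)
      = 1 + (∑ j : Fin d, x c j * x k j)
        + ∑ j : Fin d, (x c j * x c ⟨(m-1)%d, Nat.mod_lt _ hd⟩)
            * (x k j * x k ⟨(m-1)%d, Nat.mod_lt _ hd⟩) := by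
  classical
  set S := stateM d n x y m w with hS
  set g : ℕ → ℝ := fun b =>
    if hb : b < 2*d+1+1 then
      (if b = 2*d+1 then 0 else S ⟨b, hb⟩ c * S ⟨b, hb⟩ k) else 0 with hg
  have hconv : ∑ b : Fin (2*d+1+1), (if b = Fin.last (2*d+1) then 0 else S b c * S b k)
      = ∑ b ∈ Finset.range (2*d+1+1), g b := by
    rw [← Fin.sum_univ_eq_sum_range]
    refine Finset.sum_congr rfl fun b _ => ?_
    rw [hg]
    simp only [b.isLt, dif_pos]
    have : ((b:ℕ) = 2*d+1) ↔ b = Fin.last (2*d+1) := by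
      rw [Fin.ext_iff]; rfl
    by_cases hb : b = Fin.last (2*d+1)
    · rw [if_pos hb, if_pos (this.mpr hb)]
    · rw [if_neg hb, if_neg (fun h => hb (this.mp h))]
  have hm0 : m ≠ 0 := by omega
  have hlast : g (2*d+1) = 0 := by rw [hg]; simp
  rw [hconv, Finset.sum_range_succ, hlast, add_zero]
  rw [show 2*d+1 = (d+1)+d by ring, Finset.sum_range_add, Finset.sum_range_succ']
  have h0 : g 0 = 1 := by
    rw [hg]
    simp only [dif_pos (show (0:ℕ) < 2*d+1+1 by omega), if_neg (show ¬((0:ℕ) = 2*d+1) by omega)]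
    rw [hS, stateM_zero, stateM_zero, mul_one]
  have hx : ∀ j : Fin d, g ((j:ℕ)+1) = x c j * x k j := by
    intro j
    have hj := j.isLt
    rw [hg]
    simp only [dif_pos (show (j:ℕ)+1 < 2*d+1+1 by omega),
      if_neg (show ¬((j:ℕ)+1 = 2*d+1) by omega)]
    rw [hS, stateM_xrow, stateM_xrow]
  have hs : ∀ j : Fin d, g (d+1+(j:ℕ))
      = (x c j * x c ⟨(m-1)%d, Nat.mod_lt _ hd⟩) * (x k j * x k ⟨(m-1)%d, Nat.mod_lt _ hd⟩) := by
    intro j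
    have hj := j.isLt
    rw [hg]
    simp only [dif_pos (show d+1+(j:ℕ) < 2*d+1+1 by omega),
      if_neg (show ¬(d+1+(j:ℕ) = 2*d+1) by omega)]
    rw [hS, stateM_srow d n x y m w c hd hm0 j, stateM_srow d n x y m w k hd hm0 j]
    try ring
  have e1 : ∑ j ∈ Finset.range d, g (j+1) = ∑ j : Fin d, x c j * x k j := by
    rw [← Fin.sum_univ_eq_sum_range (fun j => g (j+1)) d]
    exact Finset.sum_congr rfl fun j _ => hx j
  have e2 : ∑ j ∈ Finset.range d, g (d+1+j)
      = ∑ j : Fin d, (x c j * x c ⟨(m-1)%d, Nat.mod_lt _ hd⟩)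
          * (x k j * x k ⟨(m-1)%d, Nat.mod_lt _ hd⟩) := by
    rw [← Fin.sum_univ_eq_sum_range (fun j => g (d+1+j)) d]
    exact Finset.sum_congr rfl fun j _ => hs j
  rw [e1, e2, h0]
  ring

lemma diagEmbed_mul_apply (D n : ℕ) (W : Matrix (Fin D) (Fin D) ℝ)
    (Z : Matrix (Fin (D+1)) (Fin (n+1)) ℝ) (i : Fin (D+1)) (hi : (i:ℕ) < D) (k : Fin (n+1)) :
    (diagEmbed D W * Z) i k = ∑ j : Fin D, W ⟨(i:ℕ), hi⟩ j * Z j.castSucc k := by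
  rw [Matrix.mul_apply, Fin.sum_univ_castSucc]
  have hlast : diagEmbed D W i (Fin.last D) = 0 := by
    simp only [diagEmbed, Matrix.of_apply, Fin.val_last]
    rw [dif_pos hi, dif_neg (lt_irrefl D)]
  rw [hlast, zero_mul, add_zero]
  refine Finset.sum_congr rfl fun j _ => ?_
  congr 1
  simp only [diagEmbed, Matrix.of_apply, Fin.coe_castSucc]
  rw [dif_pos hi, dif_pos j.isLt]

lemma diagEmbed_mul_last (D n : ℕ) (W : Matrix (Fin D) (Fin D) ℝ)
    (Z : Matrix (Fin (D+1)) (Fin (n+1)) ℝ) (i : Fin (D+1)) (hi : ¬ (i:ℕ) < D) (k : Fin (n+1)) :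
    (diagEmbed D W * Z) i k = 0 := by
  rw [Matrix.mul_apply]
  refine Finset.sum_eq_zero fun j _ => ?_
  simp only [diagEmbed, Matrix.of_apply]
  rw [dif_neg hi, zero_mul]

lemma bilin_step' (d n : ℕ) (hd : 0 < d) (x : Fin (n+1) → Fin d → ℝ) (y : Fin n → ℝ)
    (m : ℕ) (w : QIdx d → ℝ) :
    bilinLayer (2*d+1) n (W0def d) (W1def d (m+1)) (stateM d n x y m w)
      = stateM d n x y (m+1) w := by
  classical
  ext i k
  set Z := stateM d n x y m w with hZ
  simp only [bilinLayer, Matrix.of_apply]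
  by_cases hi : (i:ℕ) < 2*d+1
  swap
  · -- last row
    rw [diagEmbed_mul_last _ _ _ _ _ hi, zero_mul, add_zero]
    have hi' : (i:ℕ) = 2*d+1 := by have := i.isLt; omega
    have hIl : i = Fin.last (2*d+1) := Fin.ext hi'
    rw [hIl, hZ, stateM_lastrow, stateM_lastrow]
  by_cases hlow : (i:ℕ) ≤ d
  · -- rows 0..d : W0 row is zero
    have h0 : (diagEmbed (2*d+1) (W0def d) * Z) i k = 0 := by
      rw [diagEmbed_mul_apply _ _ _ _ _ hi]
      refine Finset.sum_eq_zero fun j _ => ?_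
      simp only [W0def, Matrix.of_apply]
      rw [if_neg (by omega), zero_mul]
    rw [h0, zero_mul, add_zero]
    by_cases h00 : (i:ℕ) = 0
    · simp only [hZ, stateM, Matrix.of_apply, dif_pos h00]
    · simp only [hZ, stateM, Matrix.of_apply]
      rw [dif_neg h00, dif_pos hlow, dif_neg h00, dif_pos hlow]
  · -- scratch rows
    have hiv : d+1 ≤ (i:ℕ) ∧ (i:ℕ) ≤ 2*d := by omega
    -- W0 row
    have h0 : (diagEmbed (2*d+1) (W0def d) * Z) i k = x k ⟨(i:ℕ)-d-1, by omega⟩ := by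
      rw [diagEmbed_mul_apply _ _ _ _ _ hi]
      rw [Finset.sum_eq_single (⟨(i:ℕ)-d, by omega⟩ : Fin (2*d+1))]
      · simp only [W0def, Matrix.of_apply]
        rw [if_pos ⟨by omega, show (i:ℕ)-d+d = (i:ℕ) by omega⟩, one_mul]
        have : (⟨(i:ℕ)-d, by omega⟩ : Fin (2*d+1)).castSucc
            = ⟨((⟨(i:ℕ)-d-1, by omega⟩ : Fin d) : ℕ)+1, by omega⟩ := Fin.ext (by simp; omega)
        rw [this, hZ, stateM_xrow]
      · intro j _ hj
        simp only [W0def, Matrix.of_apply]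
        rw [if_neg, zero_mul]
        intro hc
        have hc' : (j:ℕ) + d = (i:ℕ) := hc.2
        exact hj (Fin.ext (show (j:ℕ) = (i:ℕ)-d by omega))
      · intro h; exact absurd (Finset.mem_univ _) h
    -- W1 row
    have h1 : (diagEmbed (2*d+1) (W1def d (m+1)) * Z) i k
        = x k ⟨m % d, Nat.mod_lt _ hd⟩
          - (if m = 0 then 0 else x k ⟨(m-1) % d, Nat.mod_lt _ hd⟩) := by
      rw [diagEmbed_mul_apply _ _ _ _ _ hi]
      have hterm : ∀ j : Fin (2*d+1), W1def d (m+1) ⟨(i:ℕ), hi⟩ j * Z j.castSucc k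
          = (if (j:ℕ) = rI d (m+1) then 1 else 0) * Z j.castSucc k
            - (if 2 ≤ m+1 ∧ (j:ℕ) = rI d m then 1 else 0) * Z j.castSucc k := by
        intro j
        simp only [W1def, Matrix.of_apply]
        rw [if_pos (by omega : d+1 ≤ (i:ℕ))]
        simp only [Nat.add_sub_cancel]
        ring
      rw [Finset.sum_congr rfl fun j _ => hterm j, Finset.sum_sub_distrib]
      have hr1 : rI d (m+1) = m % d + 1 := by simp [rI]
      have hr0 : rI d m = (m-1) % d + 1 := rfl
      have e1 : ∑ j : Fin (2*d+1), (if (j:ℕ) = rI d (m+1) then (1:ℝ) else 0) * Z j.castSucc k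
          = x k ⟨m % d, Nat.mod_lt _ hd⟩ := by
        rw [Finset.sum_eq_single (⟨m % d + 1, by have := Nat.mod_lt m hd; omega⟩ : Fin (2*d+1))]
        · rw [if_pos (show m % d + 1 = rI d (m+1) from hr1.symm), one_mul]
          have : (⟨m % d + 1, by have := Nat.mod_lt m hd; omega⟩ : Fin (2*d+1)).castSucc
              = ⟨((⟨m % d, Nat.mod_lt _ hd⟩ : Fin d) : ℕ)+1, by have := Nat.mod_lt m hd; omega⟩ :=
            Fin.ext rfl
          rw [this, hZ, stateM_xrow]
        · intro j _ hj
          rw [if_neg, zero_mul]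
          intro hc
          exact hj (Fin.ext (by rw [hc, hr1]))
        · intro h; exact absurd (Finset.mem_univ _) h
      rw [e1]
      congr 1
      by_cases hm0 : m = 0
      · rw [if_pos hm0]
        refine Finset.sum_eq_zero fun j _ => ?_
        rw [if_neg (by omega), zero_mul]
      · rw [if_neg hm0]
        rw [Finset.sum_eq_single (⟨(m-1) % d + 1, by have := Nat.mod_lt (m-1) hd; omega⟩ : Fin (2*d+1))]
        · rw [if_pos ⟨by omega, show (m-1) % d + 1 = rI d m from hr0.symm⟩, one_mul]
          have : (⟨(m-1) % d + 1, by have := Nat.mod_lt (m-1) hd; omega⟩ : Fin (2*d+1)).castSucc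
              = ⟨((⟨(m-1) % d, Nat.mod_lt _ hd⟩ : Fin d) : ℕ)+1,
                  by have := Nat.mod_lt (m-1) hd; omega⟩ := Fin.ext rfl
          rw [this, hZ, stateM_xrow]
        · intro j _ hj
          rw [if_neg, zero_mul]
          rintro ⟨-, hc⟩
          exact hj (Fin.ext (by rw [hc, hr0]))
        · intro h; exact absurd (Finset.mem_univ _) h
    rw [h0, h1]
    -- now pure stateM computation on scratch rows
    have hZik : Z i k = if m = 0 then 0 else
        x k ⟨(i:ℕ)-d-1, by omega⟩ * x k ⟨(m-1) % d, Nat.mod_lt _ hd⟩ := by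
      rw [hZ]
      simp only [stateM, Matrix.of_apply]
      rw [dif_neg (by omega), dif_neg (by omega), dif_pos (by omega), dif_pos hd]
    have hgoal : stateM d n x y (m+1) w i k
        = x k ⟨(i:ℕ)-d-1, by omega⟩ * x k ⟨m % d, Nat.mod_lt _ hd⟩ := by
      simp only [stateM, Matrix.of_apply]
      rw [dif_neg (by omega), dif_neg (by omega), dif_pos (by omega), dif_pos hd,
        if_neg (by omega : ¬(m+1 = 0))]
      simp only [Nat.add_sub_cancel]
    rw [hZik, hgoal]
    by_cases hm0 : m = 0
    · rw [if_pos hm0, if_pos hm0, zero_add, sub_zero]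
    · rw [if_neg hm0, if_neg hm0]
      ring

lemma attn_step' (d n : ℕ) (hd : 0 < d) (hn : 0 < n) (x : Fin (n+1) → Fin d → ℝ)
    (y : Fin n → ℝ) (m : ℕ) (hm : 1 ≤ m) (e : ℝ) (w : QIdx d → ℝ) :
    attn (2*d+1) n (Pdef d) (Qdef d e) (stateM d n x y m w)
      = stateM d n x y m (fun p => if p ∈ blockQ d m then
          w p - e * ((n:ℝ)⁻¹ * ∑ i : Fin n,
            ((∑ q : QIdx d, w q * qphi d (x i.castSucc) q) + y i) * qphi d (x i.castSucc) p)
          else w p) := by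
  classical
  set Z := stateM d n x y m w with hZ
  set l : Fin n → ℝ := fun c => (∑ q : QIdx d, w q * qphi d (x c.castSucc) q) + y c with hldef
  set w' : QIdx d → ℝ := fun p => if p ∈ blockQ d m then
          w p - e * ((n:ℝ)⁻¹ * ∑ i : Fin n, l i * qphi d (x i.castSucc) p)
          else w p with hw'
  have hPZ : ∀ (i : Fin (2*d+1+1)) (c : Fin (n+1)),
      (Pdef d * Z) i c = if i = Fin.last (2*d+1) then Z (Fin.last (2*d+1)) c else 0 := by
    intro i c
    rw [Matrix.mul_apply]
    by_cases hi : i = Fin.last (2*d+1)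
    · rw [if_pos hi, Finset.sum_eq_single (Fin.last (2*d+1))]
      · simp [Pdef, Matrix.single, hi]
      · intro b _ hb
        simp [Pdef, Matrix.single, Ne.symm hb]
      · intro h; exact absurd (Finset.mem_univ _) h
    · rw [if_neg hi]
      refine Finset.sum_eq_zero fun b _ => ?_
      simp [Pdef, Matrix.single, Ne.symm hi]
  have hB : ∀ (c k : Fin (n+1)), (Zᵀ * Qdef d e * Z) c k
      = -e * ∑ b : Fin (2*d+1+1), (if b = Fin.last (2*d+1) then 0 else Z b c * Z b k) := by
    intro c k
    rw [Matrix.mul_apply, Finset.mul_sum]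
    refine Finset.sum_congr rfl fun b _ => ?_
    have h1 : (Zᵀ * Qdef d e) c b = Z b c * (if b = Fin.last (2*d+1) then 0 else -e) := by
      rw [Qdef, Matrix.mul_diagonal, Matrix.transpose_apply]
    rw [h1]
    by_cases hb : b = Fin.last (2*d+1)
    · rw [if_pos hb, if_pos hb]; ring
    · rw [if_neg hb, if_neg hb]; ring
  have hT : ∀ k : Fin (n+1), (Pdef d * Z * attnMask n * (Zᵀ * Qdef d e * Z)) (Fin.last (2*d+1)) k
      = ∑ c : Fin n, Z (Fin.last (2*d+1)) c.castSucc *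
          (-e * ∑ b : Fin (2*d+1+1), (if b = Fin.last (2*d+1) then 0
            else Z b c.castSucc * Z b k)) := by
    intro k
    rw [Matrix.mul_apply]
    have hmask : ∀ c : Fin (n+1), (Pdef d * Z * attnMask n) (Fin.last (2*d+1)) c
        = if c = Fin.last n then 0 else Z (Fin.last (2*d+1)) c := by
      intro c
      rw [attnMask, Matrix.mul_diagonal, hPZ, if_pos rfl]
      by_cases hc : c = Fin.last n
      · rw [if_pos hc, if_pos hc, mul_zero]
      · rw [if_neg hc, if_neg hc, mul_one]
    calc ∑ c : Fin (n+1), (Pdef d * Z * attnMask n) (Fin.last (2*d+1)) c * (Zᵀ * Qdef d e * Z) c k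
        = ∑ c : Fin (n+1), (if c = Fin.last n then 0
            else Z (Fin.last (2*d+1)) c * (Zᵀ * Qdef d e * Z) c k) := by
          refine Finset.sum_congr rfl fun c _ => ?_
          rw [hmask]
          by_cases hc : c = Fin.last n
          · rw [if_pos hc, if_pos hc, zero_mul]
          · rw [if_neg hc, if_neg hc]
      _ = ∑ c : Fin n, Z (Fin.last (2*d+1)) c.castSucc * (Zᵀ * Qdef d e * Z) c.castSucc k := by
          rw [Fin.sum_univ_castSucc, if_pos rfl, add_zero]
          refine Finset.sum_congr rfl fun c _ => ?_
          rw [if_neg (Fin.castSucc_lt_last c).ne]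
      _ = _ := by
          refine Finset.sum_congr rfl fun c _ => ?_
          rw [hB]
  have hZlast : ∀ k : Fin (n+1), Z (Fin.last (2*d+1)) k
      = (∑ q : QIdx d, w q * qphi d (x k) q)
        + (if hk : (k:ℕ) < n then y ⟨(k:ℕ), hk⟩ else 0) := by
    intro k; rw [hZ, stateM_lastrow]
  have hl : ∀ c : Fin n, Z (Fin.last (2*d+1)) c.castSucc = l c := by
    intro c
    rw [hZlast]
    have hc : ((c.castSucc : Fin (n+1)) : ℕ) < n := c.isLt
    rw [dif_pos hc, hldef]
    exact congrArg _ (congrArg _ (Fin.ext rfl))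
  ext i k
  simp only [attn, Matrix.add_apply, Matrix.smul_apply, smul_eq_mul]
  by_cases hi : i = Fin.last (2*d+1)
  swap
  · -- non-last rows unchanged
    have hz : (Pdef d * Z * attnMask n * (Zᵀ * Qdef d e * Z)) i k = 0 := by
      rw [Matrix.mul_apply]
      refine Finset.sum_eq_zero fun c _ => ?_
      rw [attnMask, Matrix.mul_diagonal, hPZ, if_neg hi, zero_mul, zero_mul]
    rw [hz, mul_zero, add_zero, hZ]
    have hiv : (i:ℕ) < 2*d+1 := by
      rcases lt_or_eq_of_le (Nat.lt_succ_iff.mp i.isLt) with h | h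
      · exact h
      · exact absurd (Fin.ext h) hi
    simp only [stateM, Matrix.of_apply]
    split_ifs <;> first | omega | rfl
  · -- last row
    set E : Fin n → ℝ := fun c =>
      1 + (∑ j : Fin d, x c.castSucc j * x k j)
        + ∑ j : Fin d, (x c.castSucc j * x c.castSucc ⟨(m-1)%d, Nat.mod_lt _ hd⟩)
            * (x k j * x k ⟨(m-1)%d, Nat.mod_lt _ hd⟩) with hE
    have hsumE : ∀ c : Fin n, ∑ b : Fin (2*d+1+1), (if b = Fin.last (2*d+1) then 0
        else Z b c.castSucc * Z b k) = E c := by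
      intro c
      rw [hZ, hE]
      exact col_inner' d n hd x y m hm w c.castSucc k
    have hblockE : ∀ c : Fin n, ∑ p ∈ blockQ d m,
        qphi d (x c.castSucc) p * qphi d (x k) p = E c := by
      intro c
      rw [hE]
      exact block_sum' d hd m (x c.castSucc) (x k)
    rw [hi, hT k]
    simp only [hsumE, hl]
    rw [hZlast k]
    show _ = stateM d n x y m w' (Fin.last (2*d+1)) k
    rw [stateM_lastrow]
    have hsplit : ∑ p : QIdx d, w' p * qphi d (x k) p
        = (∑ p : QIdx d, w p * qphi d (x k) p)
          - e * (n:ℝ)⁻¹ * ∑ c : Fin n, l c * E c := by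
      have step1 : ∑ p : QIdx d, w' p * qphi d (x k) p
          = ∑ p : QIdx d, (w p * qphi d (x k) p
              - (if p ∈ blockQ d m then
                  e * ((n:ℝ)⁻¹ * ∑ c : Fin n, l c * qphi d (x c.castSucc) p)
                    * qphi d (x k) p else 0)) := by
        refine Finset.sum_congr rfl fun p _ => ?_
        simp only [hw']
        by_cases hp : p ∈ blockQ d m
        · rw [if_pos hp, if_pos hp]; ring
        · rw [if_neg hp, if_neg hp]; ring
      rw [step1, Finset.sum_sub_distrib]
      refine congrArg (fun t => (∑ p : QIdx d, w p * qphi d (x k) p) - t) ?_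
      rw [Finset.sum_ite_mem, Finset.univ_inter]
      have step2 : ∀ p : QIdx d,
          e * ((n:ℝ)⁻¹ * ∑ c : Fin n, l c * qphi d (x c.castSucc) p) * qphi d (x k) p
          = e * (n:ℝ)⁻¹ * ∑ c : Fin n,
              l c * (qphi d (x c.castSucc) p * qphi d (x k) p) := by
        intro p
        rw [Finset.mul_sum, Finset.mul_sum, Finset.sum_mul, Finset.mul_sum]
        refine Finset.sum_congr rfl fun c _ => ?_
        ring
      rw [Finset.sum_congr rfl fun p _ => step2 p]
      rw [← Finset.mul_sum, Finset.sum_comm]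
      refine congrArg (fun t => e * (n:ℝ)⁻¹ * t) ?_
      refine Finset.sum_congr rfl fun c _ => ?_
      rw [← Finset.mul_sum, hblockE c]
    rw [hsplit]
    have hS1 : ∑ c : Fin n, l c * (-e * E c) = -e * ∑ c : Fin n, l c * E c := by
      rw [Finset.mul_sum]
      refine Finset.sum_congr rfl fun c _ => ?_
      ring
    rw [hS1]
    ring

/-- with embedding dimension `D = 2d+1` there are weights of a `2L`-layer
bilinear Transformer whose prediction entry after `2ℓ` layers equals `f(x_{n+1}; w^{(ℓ)})`,
where `w^{(ℓ)}` are the block-coordinate descent iterates for the quadratic regression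
loss with step sizes `η^{(ℓ)}` and blocks `b_ℓ` as above. -/
theorem stmt16 (d n L : ℕ) (hd : 1 ≤ d) (hn : 1 ≤ n) (hL : 1 ≤ L) (η : ℕ → ℝ) :
    ∃ (W0 W1 : ℕ → Matrix (Fin (2 * d + 1)) (Fin (2 * d + 1)) ℝ)
      (P Q : ℕ → Matrix (Fin (2 * d + 1 + 1)) (Fin (2 * d + 1 + 1)) ℝ),
      ∀ (x : Fin (n + 1) → Fin d → ℝ) (y : Fin n → ℝ) (ℓ : ℕ), 1 ≤ ℓ → ℓ ≤ L →
        TFbilinFwd (2 * d + 1) n W0 W1 P Q (promptX d (2 * d + 1) n x y) ℓ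
            (Fin.last (2 * d + 1)) (Fin.last n)
          = ∑ p : QIdx d,
              bcdIter (quadLoss d n (fun i => x i.castSucc) y) η (blockQ d) ℓ p *
                qphi d (x (Fin.last n)) p := by
  refine ⟨fun _ => W0def d, fun t => W1def d t, fun _ => Pdef d, fun t => Qdef d (η t), ?_⟩
  intro x y ℓ hl1 hlL
  set F := quadLoss d n (fun i => x i.castSucc) y with hF
  have key : ∀ t : ℕ, TFbilinFwd (2*d+1) n (fun _ => W0def d) (fun t => W1def d t)
      (fun _ => Pdef d) (fun t => Qdef d (η t)) (promptX d (2*d+1) n x y) t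
      = stateM d n x y t (bcdIter F η (blockQ d) t) := by
    intro t
    induction t with
    | zero =>
      show promptX d (2*d+1) n x y = _
      have h0 : bcdIter F η (blockQ d) 0 = (0 : QIdx d → ℝ) := rfl
      rw [h0, ← stateM_base' d n x y]
    | succ t ih =>
      show attn (2*d+1) n (Pdef d) (Qdef d (η (t+1)))
          (bilinLayer (2*d+1) n (W0def d) (W1def d (t+1))
            (TFbilinFwd (2*d+1) n _ _ _ _ (promptX d (2*d+1) n x y) t)) = _
      rw [ih, bilin_step' d n hd x y t _,
        attn_step' d n hd hn x y (t+1) (by omega) (η (t+1)) _]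
      refine congrArg _ (funext fun p => ?_)
      have hrec : bcdIter F η (blockQ d) (t+1) p
          = if p ∈ blockQ d (t+1) then
              bcdIter F η (blockQ d) t p
                - η (t+1) * fderiv ℝ F (bcdIter F η (blockQ d) t) (Pi.single p 1)
            else bcdIter F η (blockQ d) t p := rfl
      rw [hrec]
      by_cases hp : p ∈ blockQ d (t+1)
      · rw [if_pos hp, if_pos hp, hF, fderiv_quadLoss']
      · rw [if_neg hp, if_neg hp]
  rw [key ℓ, stateM_lastrow, dif_neg (show ¬ ((Fin.last n : Fin (n+1)):ℕ) < n from by simp),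
    add_zero]
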